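/- (Proposition 4, expected energy) Let r > 0 and let P be the Half-Gaussian probability density P(ψ) = (2/(π·r))·exp(−ψ²/(π·r²)) for ψ ≥ 0 and P(ψ) = 0 otherwise (so the mean is μ = r). Then for every c_e ≥ 0, the expected energy consumption satisfies E_exp(c_e) = (g_e + i_e·c_e·erf(c_e/√π) + i_e·(exp(−c_e²/π) − 1))·r, where erf(x) = (2/√π)·∫₀^x exp(−t²) dt. -/

import Mathlib

open MeasureTheory Set Real

/-- Expected energy consumption `E_exp(c) = μ·g_e + i_e·∫₀^{c·μ} (c·μ − ψ) P(ψ) dψ`. -/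
noncomputable def Eexp (P : ℝ → ℝ) (g_e i_e μ c : ℝ) : ℝ :=
  μ * g_e + i_e * ∫ ψ in (0:ℝ)..(c * μ), (c * μ - ψ) * P ψ

/-- The error function `erf(x) = (2/√π)·∫₀^x exp(−t²) dt`. -/
noncomputable def erf (x : ℝ) : ℝ :=
  (2 / Real.sqrt π) * ∫ t in (0:ℝ)..x, Real.exp (-t ^ 2)

/-- The Half-Gaussian density with mean `r`:
`P(ψ) = (2/(π·r))·exp(−ψ²/(π·r²))` for `ψ ≥ 0`, `0` otherwise. -/
noncomputable def halfGaussianPDF (r : ℝ) : ℝ → ℝ :=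
  fun ψ => if 0 ≤ ψ then (2 / (π * r)) * Real.exp (-ψ ^ 2 / (π * r ^ 2)) else 0

/-- (Proposition 4, expected energy) For the Half-Gaussian density with mean `μ = r`, for
every `c_e ≥ 0`,
`E_exp(c_e) = (g_e + i_e·c_e·erf(c_e/√π) + i_e·(exp(−c_e²/π) − 1))·r`. -/
theorem stmt_16 (r g_e i_e : ℝ) (hr : 0 < r) (hg : 0 < g_e) (hi : 0 < i_e) :
    ∀ c_e : ℝ, 0 ≤ c_e →
      Eexp (halfGaussianPDF r) g_e i_e r c_e
        = (g_e + i_e * c_e * erf (c_e / Real.sqrt π)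
            + i_e * (Real.exp (-c_e ^ 2 / π) - 1)) * r := by
  intro c hc
  have hπ : (0:ℝ) < π := Real.pi_pos
  have hrne : r ≠ 0 := hr.ne'
  have hπne : π ≠ 0 := hπ.ne'
  have hs : Real.sqrt π * Real.sqrt π = π := Real.mul_self_sqrt hπ.le
  have hsne : Real.sqrt π ≠ 0 := by positivity
  have hcr : (0:ℝ) ≤ c * r := mul_nonneg hc hr.le
  have hcont : Continuous fun ψ : ℝ => (2 / (π * r)) * Real.exp (-ψ ^ 2 / (π * r ^ 2)) := by
    continuity
  -- replace the piecewise density by its smooth formula on the interval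
  have hcong : (∫ ψ in (0:ℝ)..(c * r), (c * r - ψ) * halfGaussianPDF r ψ)
      = ∫ ψ in (0:ℝ)..(c * r),
          (c * r - ψ) * ((2 / (π * r)) * Real.exp (-ψ ^ 2 / (π * r ^ 2))) := by
    apply intervalIntegral.integral_congr
    intro ψ hψ
    rw [Set.uIcc_of_le hcr] at hψ
    simp [halfGaussianPDF, hψ.1]
  -- split the integral
  have hI1 : IntervalIntegrable
      (fun ψ : ℝ => c * r * ((2 / (π * r)) * Real.exp (-ψ ^ 2 / (π * r ^ 2))))
      volume 0 (c * r) := (continuous_const.mul hcont).intervalIntegrable _ _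
  have hI2 : IntervalIntegrable
      (fun ψ : ℝ => ψ * ((2 / (π * r)) * Real.exp (-ψ ^ 2 / (π * r ^ 2))))
      volume 0 (c * r) := (continuous_id.mul hcont).intervalIntegrable _ _
  have hsplit : (∫ ψ in (0:ℝ)..(c * r),
          (c * r - ψ) * ((2 / (π * r)) * Real.exp (-ψ ^ 2 / (π * r ^ 2))))
      = (∫ ψ in (0:ℝ)..(c * r),
          c * r * ((2 / (π * r)) * Real.exp (-ψ ^ 2 / (π * r ^ 2))))
        - ∫ ψ in (0:ℝ)..(c * r),
          ψ * ((2 / (π * r)) * Real.exp (-ψ ^ 2 / (π * r ^ 2))) := by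
    rw [← intervalIntegral.integral_sub hI1 hI2]
    apply intervalIntegral.integral_congr
    intro ψ _
    ring
  -- part A : substitution
  have hA : (∫ ψ in (0:ℝ)..(c * r), Real.exp (-ψ ^ 2 / (π * r ^ 2)))
      = (Real.sqrt π * r) * ∫ t in (0:ℝ)..(c / Real.sqrt π), Real.exp (-t ^ 2) := by
    have hkey : ∀ ψ : ℝ, Real.exp (-ψ ^ 2 / (π * r ^ 2))
        = (fun t => Real.exp (-t ^ 2)) (ψ / (Real.sqrt π * r)) := by
      intro ψ
      have h2 : (Real.sqrt π * r) ^ 2 = π * r ^ 2 := by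
        rw [mul_pow, Real.sq_sqrt hπ.le]
      simp only [div_pow, h2, neg_div]
    calc (∫ ψ in (0:ℝ)..(c * r), Real.exp (-ψ ^ 2 / (π * r ^ 2)))
        = ∫ ψ in (0:ℝ)..(c * r), (fun t => Real.exp (-t ^ 2)) (ψ / (Real.sqrt π * r)) := by
          simp_rw [hkey]
      _ = (Real.sqrt π * r) • ∫ t in (0:ℝ)/(Real.sqrt π * r)..(c * r)/(Real.sqrt π * r),
            Real.exp (-t ^ 2) := by
          exact intervalIntegral.integral_comp_div (c := Real.sqrt π * r) (f := fun t => Real.exp (-t ^ 2)) (by positivity)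
      _ = (Real.sqrt π * r) * ∫ t in (0:ℝ)..(c / Real.sqrt π), Real.exp (-t ^ 2) := by
          rw [smul_eq_mul]
          congr 2
          · simp
          · field_simp
  -- part B : fundamental theorem of calculus
  have hB : (∫ ψ in (0:ℝ)..(c * r), ψ * ((2 / (π * r)) * Real.exp (-ψ ^ 2 / (π * r ^ 2))))
      = r * (1 - Real.exp (-c ^ 2 / π)) := by
    have hderiv : ∀ ψ : ℝ, HasDerivAt (fun ψ : ℝ => -r * Real.exp (-ψ ^ 2 / (π * r ^ 2)))
        (ψ * ((2 / (π * r)) * Real.exp (-ψ ^ 2 / (π * r ^ 2)))) ψ := by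
      intro ψ
      have h1 : HasDerivAt (fun ψ : ℝ => -ψ ^ 2 / (π * r ^ 2)) (-(2 * ψ) / (π * r ^ 2)) ψ := by
        simpa using ((hasDerivAt_pow 2 ψ).neg.div_const (π * r ^ 2))
      have h2 := (h1.exp).const_mul (-r)
      refine h2.congr_deriv ?_
      field_simp
    rw [intervalIntegral.integral_eq_sub_of_hasDerivAt (fun ψ _ => hderiv ψ)
      (hI2)]
    have : (c * r) ^ 2 / (π * r ^ 2) = c ^ 2 / π := by
      field_simp
    rw [show -(c * r) ^ 2 / (π * r ^ 2) = -c ^ 2 / π by rw [neg_div, neg_div, this]]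
    simp
    ring
  -- assemble
  rw [Eexp, hcong, hsplit]
  rw [intervalIntegral.integral_const_mul, intervalIntegral.integral_const_mul, hA, hB]
  rw [erf]
  field_simp
  linear_combination
    (2 * i_e * c * (∫ t in (0:ℝ)..(c / Real.sqrt π), Real.exp (-t ^ 2))) * hs
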